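/- With the Todd class Todd(A) : F A ⟶ F A defined as (λ_{F A}).inv ≫ (coevΞ ▷ F A) ≫ associator ≫ (F A ◁ ch(evΔ)) ≫ (ρ_{F A}).hom, and ToddInv(A) : F A ⟶ F A defined by the same formula with coevΞ replaced by ch(coevΔ) and ch(evΔ) replaced by evΞ, one has Todd(A) ≫ ToddInv(A) = 𝟙_{F A} and ToddInv(A) ≫ Todd(A) = 𝟙_{F A}; in particular the Todd class is invertible. -/

import Mathlib

open CategoryTheory MonoidalCategory Functor.LaxMonoidal Functor.OplaxMonoidal

/-- An *exact pairing* for a pair of objects `(A, B)` in a monoidal category: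
morphisms `coev : 𝟙 ⟶ A ⊗ B` and `ev : B ⊗ A ⟶ 𝟙` satisfying the two zigzag
identities (as in Mathlib's `CategoryTheory.ExactPairing`). -/
def IsExactPairing {C : Type*} [Category C] [MonoidalCategory C]
    (A B : C) (coev : 𝟙_ C ⟶ A ⊗ B) (ev : B ⊗ A ⟶ 𝟙_ C) : Prop :=
  (λ_ A).inv ≫ (coev ▷ A) ≫ (α_ A B A).hom ≫ (A ◁ ev) ≫ (ρ_ A).hom = 𝟙 A ∧
  (ρ_ B).inv ≫ (B ◁ coev) ≫ (α_ B A B).inv ≫ (ev ▷ B) ≫ (λ_ B).hom = 𝟙 B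

/-- The structure-corrected image `ch(ev) : F B ⊗ F A ⟶ 𝟙` under a strong
monoidal functor `F` of an evaluation-type morphism `ev : B ⊗ A ⟶ 𝟙`. -/
def chEv {C : Type*} [Category C] [MonoidalCategory C]
    {D : Type*} [Category D] [MonoidalCategory D]
    (F : C ⥤ D) [F.Monoidal] {A B : C} (ev : B ⊗ A ⟶ 𝟙_ C) :
    F.obj B ⊗ F.obj A ⟶ 𝟙_ D :=
  μ F B A ≫ F.map ev ≫ η F

/-- The structure-corrected image `ch(coev) : 𝟙 ⟶ F A ⊗ F B` under a strong
monoidal functor `F` of a coevaluation-type morphism `coev : 𝟙 ⟶ A ⊗ B`. -/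
def chCoev {C : Type*} [Category C] [MonoidalCategory C]
    {D : Type*} [Category D] [MonoidalCategory D]
    (F : C ⥤ D) [F.Monoidal] {A B : C} (coev : 𝟙_ C ⟶ A ⊗ B) :
    𝟙_ D ⟶ F.obj A ⊗ F.obj B :=
  ε F ≫ F.map coev ≫ δ F A B

/-- The Todd class `Todd(A) : F A ⟶ F A`, computed from the cyclic coevaluation
`coevΞ : 𝟙 ⟶ F A ⊗ F A'` and the Chern character image `ch(evΔ)` of the
K-homology evaluation `evΔ : A' ⊗ A ⟶ 𝟙`:
`Todd(A) = (λ_{F A}).inv ≫ (coevΞ ▷ F A) ≫ associator ≫ (F A ◁ ch(evΔ)) ≫ (ρ_{F A}).hom`. -/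
def toddClass {C : Type*} [Category C] [MonoidalCategory C]
    {D : Type*} [Category D] [MonoidalCategory D]
    (F : C ⥤ D) [F.Monoidal] {A A' : C}
    (evΔ : A' ⊗ A ⟶ 𝟙_ C) (coevΞ : 𝟙_ D ⟶ F.obj A ⊗ F.obj A') :
    F.obj A ⟶ F.obj A :=
  (λ_ (F.obj A)).inv ≫ (coevΞ ▷ F.obj A) ≫
    (α_ (F.obj A) (F.obj A') (F.obj A)).hom ≫ (F.obj A ◁ chEv F evΔ) ≫
      (ρ_ (F.obj A)).hom

/-- The inverse Todd class `ToddInv(A) : F A ⟶ F A`, defined by the same formula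
as the Todd class, with `coevΞ` replaced by `ch(coevΔ)` and `ch(evΔ)` replaced
by the cyclic evaluation `evΞ`. -/
def toddInv {C : Type*} [Category C] [MonoidalCategory C]
    {D : Type*} [Category D] [MonoidalCategory D]
    (F : C ⥤ D) [F.Monoidal] {A A' : C}
    (coevΔ : 𝟙_ C ⟶ A ⊗ A') (evΞ : F.obj A' ⊗ F.obj A ⟶ 𝟙_ D) :
    F.obj A ⟶ F.obj A :=
  (λ_ (F.obj A)).inv ≫ (chCoev F coevΔ ▷ F.obj A) ≫
    (α_ (F.obj A) (F.obj A') (F.obj A)).hom ≫ (F.obj A ◁ evΞ) ≫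
      (ρ_ (F.obj A)).hom


noncomputable section ToddAux

open CategoryTheory.Functor.Monoidal

variable {C : Type*} [Category C] [MonoidalCategory C]
variable {D : Type*} [Category D] [MonoidalCategory D]

/-- Convert an `IsExactPairing` to Mathlib's `ExactPairing`. -/
def IsExactPairing.toPairing {A B : C} {c : 𝟙_ C ⟶ A ⊗ B} {e : B ⊗ A ⟶ 𝟙_ C}
    (h : IsExactPairing A B c e) : ExactPairing A B where
  coevaluation' := c
  evaluation' := e
  coevaluation_evaluation' := by
    rw [← cancel_epi (ρ_ B).inv, ← cancel_mono (λ_ B).hom]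
    simpa only [Category.assoc, Iso.inv_hom_id, Iso.inv_hom_id_assoc, Category.comp_id]
      using h.2
  evaluation_coevaluation' := by
    rw [← cancel_epi (λ_ A).inv, ← cancel_mono (ρ_ A).hom]
    simpa only [Category.assoc, Iso.inv_hom_id, Iso.inv_hom_id_assoc, Category.comp_id]
      using h.1

lemma isExactPairing_of (A B : C) [ExactPairing A B] :
    IsExactPairing A B (η_ A B) (ε_ A B) := by
  constructor
  · rw [← cancel_epi (λ_ A).hom]
    simp
  · rw [← cancel_epi (ρ_ B).hom]
    simp

/-- The image of an exact pairing under a strong monoidal functor is an exact pairing. -/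
def pairingImage (F : C ⥤ D) [F.Monoidal] {X Y : C} [ExactPairing X Y] :
    ExactPairing (F.obj X) (F.obj Y) where
  coevaluation' := ε F ≫ F.map (η_ X Y) ≫ δ F X Y
  evaluation' := μ F Y X ≫ F.map (ε_ X Y) ≫ η F
  coevaluation_evaluation' := by
    have h := congrArg F.map (ExactPairing.coevaluation_evaluation X Y)
    simp only [F.map_comp, map_whiskerLeft, map_whiskerRight,
      map_associator_inv, map_rightUnitor, map_leftUnitor_inv, Category.assoc,
      μ_δ_assoc] at h
    have hc : F.obj Y ◁ F.map (η_ X Y) ≫ F.obj Y ◁ δ F X Y ≫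
        (α_ (F.obj Y) (F.obj X) (F.obj Y)).inv ≫ μ F Y X ▷ F.obj Y ≫
        F.map (ε_ X Y) ▷ F.obj Y =
        F.obj Y ◁ η F ≫ (ρ_ (F.obj Y)).hom ≫ (λ_ (F.obj Y)).inv ≫ ε F ▷ F.obj Y := by
      rw [← cancel_epi (δ F Y (𝟙_ C)), ← cancel_mono (μ F (𝟙_ C) Y)]
      simpa only [Category.assoc] using h
    have hc' := reassoc_of% hc
    simp only [MonoidalCategory.whiskerLeft_comp, MonoidalCategory.comp_whiskerRight,
      Category.assoc, hc', whiskerLeft_ε_η_assoc, whiskerRight_ε_η]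
    simp
  evaluation_coevaluation' := by
    have h := congrArg F.map (ExactPairing.evaluation_coevaluation X Y)
    simp only [F.map_comp, map_whiskerLeft, map_whiskerRight,
      map_associator, map_leftUnitor, map_rightUnitor_inv, Category.assoc,
      μ_δ_assoc] at h
    have hc : F.map (η_ X Y) ▷ F.obj X ≫ δ F X Y ▷ F.obj X ≫
        (α_ (F.obj X) (F.obj Y) (F.obj X)).hom ≫ F.obj X ◁ μ F Y X ≫
        F.obj X ◁ F.map (ε_ X Y) =
        η F ▷ F.obj X ≫ (λ_ (F.obj X)).hom ≫ (ρ_ (F.obj X)).inv ≫ F.obj X ◁ ε F := by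
      rw [← cancel_epi (δ F (𝟙_ C) X), ← cancel_mono (μ F X (𝟙_ C))]
      simpa only [Category.assoc] using h
    have hc' := reassoc_of% hc
    simp only [MonoidalCategory.whiskerLeft_comp, MonoidalCategory.comp_whiskerRight,
      Category.assoc, hc', whiskerRight_ε_η_assoc, whiskerLeft_ε_η]
    simp

/-- Two exact pairings on the same pair of objects give mutually inverse "comparison"
endomorphisms. -/
lemma pairing_homs_inverse {X Y : D} {c₁ c₂ : 𝟙_ D ⟶ X ⊗ Y} {e₁ e₂ : Y ⊗ X ⟶ 𝟙_ D}
    (h₁ : IsExactPairing X Y c₁ e₁) (h₂ : IsExactPairing X Y c₂ e₂) :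
    ((λ_ X).inv ≫ c₂ ▷ X ≫ (α_ X Y X).hom ≫ X ◁ e₁ ≫ (ρ_ X).hom) ≫
      ((λ_ X).inv ≫ c₁ ▷ X ≫ (α_ X Y X).hom ≫ X ◁ e₂ ≫ (ρ_ X).hom) = 𝟙 X := by
  have e1 : (λ_ X).inv ≫ c₂ ▷ X ≫ (α_ X Y X).hom ≫ X ◁ e₁ ≫ (ρ_ X).hom =
      (leftDualIso h₁.toPairing h₂.toPairing).hom := by
    simp [leftDualIso, leftAdjointMate, ExactPairing.coevaluation, ExactPairing.evaluation,
      IsExactPairing.toPairing]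
    rfl
  have e2 : (λ_ X).inv ≫ c₁ ▷ X ≫ (α_ X Y X).hom ≫ X ◁ e₂ ≫ (ρ_ X).hom =
      (leftDualIso h₁.toPairing h₂.toPairing).inv := by
    simp [leftDualIso, leftAdjointMate, ExactPairing.coevaluation, ExactPairing.evaluation,
      IsExactPairing.toPairing]
    rfl
  rw [e1, e2, Iso.hom_inv_id]

end ToddAux

/-- Invertibility of the Todd class: given an exact pairing `(coevΔ, evΔ)` for
`(A, A')` in `C` (the K-homology fundamental class) and an exact pairing
`(coevΞ, evΞ)` for `(F A, F A')` in `D` (the cyclic fundamental class),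
`Todd(A) ≫ ToddInv(A) = 𝟙` and `ToddInv(A) ≫ Todd(A) = 𝟙`; in particular the
Todd class is invertible. -/
theorem toddClass_isInvertible
    {C : Type*} [Category C] [MonoidalCategory C]
    {D : Type*} [Category D] [MonoidalCategory D]
    (F : C ⥤ D) [F.Monoidal] {A A' : C}
    (coevΔ : 𝟙_ C ⟶ A ⊗ A') (evΔ : A' ⊗ A ⟶ 𝟙_ C)
    (coevΞ : 𝟙_ D ⟶ F.obj A ⊗ F.obj A') (evΞ : F.obj A' ⊗ F.obj A ⟶ 𝟙_ D)
    (hΔ : IsExactPairing A A' coevΔ evΔ)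
    (hΞ : IsExactPairing (F.obj A) (F.obj A') coevΞ evΞ) :
    toddClass F evΔ coevΞ ≫ toddInv F coevΔ evΞ = 𝟙 (F.obj A) ∧
    toddInv F coevΔ evΞ ≫ toddClass F evΔ coevΞ = 𝟙 (F.obj A) ∧
    IsIso (toddClass F evΔ coevΞ) := by
  letI pΔ : ExactPairing A A' := hΔ.toPairing
  letI : ExactPairing (F.obj A) (F.obj A') := pairingImage F
  have himg : IsExactPairing (F.obj A) (F.obj A') (chCoev F coevΔ) (chEv F evΔ) :=
    isExactPairing_of (F.obj A) (F.obj A')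
  have h1 : toddClass F evΔ coevΞ ≫ toddInv F coevΔ evΞ = 𝟙 (F.obj A) :=
    pairing_homs_inverse himg hΞ
  have h2 : toddInv F coevΔ evΞ ≫ toddClass F evΔ coevΞ = 𝟙 (F.obj A) :=
    pairing_homs_inverse hΞ himg
  exact ⟨h1, h2, ⟨toddInv F coevΔ evΞ, h1, h2⟩⟩
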